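/- Let K be a field, let v be a K-valuation on K(x,y), and suppose α is a negative indivisible element of the value group and β is not commensurable with α. If v(x) = mα, v(y) = nα with m, n coprime positive integers, v(K[x,y]*) is reversely well-ordered, v(K(x,y)*) = ℤ⊕ℤ, and w ∈ K[x,y]* satisfies deg_y w = m and v(w) = β, then v(K(x)[y]*) ⊆ ℤα + ℤ_{≥0}β. -/

import Mathlib

open Polynomial

/-- An element of `K(x)[y]` lies in `K[x,y]` iff all its coefficients are polynomials. -/
def polyCoeffs (K : Type*) [Field K] (f : Polynomial (RatFunc K)) : Prop :=
  ∀ i : ℕ, ∃ p : Polynomial K, f.coeff i = algebraMap (Polynomial K) (RatFunc K) p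


namespace Stmt19Aux


variable {K Γ : Type*} [Field K] [AddCommGroup Γ] [LinearOrder Γ] [IsOrderedAddMonoid Γ]

lemma smul_inj {α : Γ} (hα : α ≠ 0) {c d : ℤ} (h : c • α = d • α) : c = d := by
  by_contra hcd
  have hsub : (c - d) • α = 0 := by rw [sub_smul, h, sub_self]
  have hne : c - d ≠ 0 := sub_ne_zero.mpr hcd
  rcases hα.lt_or_gt with ha|ha
  · rcases hne.lt_or_gt with h1|h1
    · have := zsmul_pos (neg_pos.mpr ha) (by omega : (0:ℤ) < d - c)
      rw [smul_neg, ← neg_smul, neg_sub, hsub] at this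
      simp at this
    · have := zsmul_pos (neg_pos.mpr ha) h1
      rw [smul_neg, hsub] at this
      simp at this
  · rcases hne.lt_or_gt with h1|h1
    · have := zsmul_pos ha (by omega : (0:ℤ) < d - c)
      rw [← neg_sub c d, neg_smul, hsub] at this
      simp at this
    · have := zsmul_pos ha h1
      rw [hsub] at this
      exact lt_irrefl _ this

section V
variable (v : RatFunc (RatFunc K) → WithTop Γ)
  (hv0 : ∀ f, v f = ⊤ ↔ f = 0)
  (hvmul : ∀ f g, v (f * g) = v f + v g)

include hv0 hvmul

lemma v_one : v 1 = 0 := by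
  have h := hvmul 1 1
  rw [mul_one] at h
  have h1 : v 1 ≠ ⊤ := fun ht => one_ne_zero ((hv0 1).mp ht)
  lift v 1 to Γ using h1 with γ hγ
  rw [← WithTop.coe_add] at h
  have : γ = γ + γ := WithTop.coe_injective h
  have : γ = 0 := by
    have := left_eq_add.mp this  -- γ + γ = γ → γ = 0? check direction
    exact this
  exact_mod_cast this

lemma v_neg (f : RatFunc (RatFunc K)) : v (-f) = v f := by
  have hm1 : v (-1 : RatFunc (RatFunc K)) = 0 := by
    have h := hvmul (-1) (-1)
    rw [neg_mul_neg, one_mul, v_one v hv0 hvmul] at h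
    have h1 : v (-1 : RatFunc (RatFunc K)) ≠ ⊤ := fun ht => (by norm_num : (-1:RatFunc (RatFunc K)) ≠ 0) ((hv0 _).mp ht)
    lift v (-1 : RatFunc (RatFunc K)) to Γ using h1 with γ hγ
    rw [← WithTop.coe_add] at h
    have : γ + γ = 0 := by exact_mod_cast h.symm
    have : γ = 0 := by
      rcases lt_trichotomy γ 0 with h'|h'|h'
      · exact absurd this (ne_of_lt (by simpa using add_lt_add h' h'))
      · exact h'
      · exact absurd this (ne_of_gt (by simpa using add_lt_add h' h'))
    exact_mod_cast this
  have := hvmul (-1) f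
  rw [neg_one_mul, hm1, zero_add] at this
  exact this


lemma v_add_eq_min (hvadd : ∀ f g, min (v f) (v g) ≤ v (f + g))
    (f g : RatFunc (RatFunc K)) (hne : v f ≠ v g) :
    v (f + g) = min (v f) (v g) := by
  rcases hne.lt_or_gt with h|h
  · -- v f < v g, show v (f+g) = v f
    have h1 : min (v f) (v g) = v f := min_eq_left h.le
    rw [h1]
    refine le_antisymm ?_ (h1 ▸ hvadd f g)
    by_contra hgt
    push_neg at hgt
    have : v f = v ((f + g) + (-g)) := by ring_nf
    have h2 : min (v (f + g)) (v (-g)) ≤ v f := by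
      rw [this]; exact hvadd _ _
    rw [v_neg v hv0 hvmul] at h2
    have : v f < min (v (f + g)) (v g) := lt_min hgt h
    exact absurd (lt_of_lt_of_le this h2) (lt_irrefl _)
  · have h1 : min (v f) (v g) = v g := min_eq_right h.le
    rw [h1]
    refine le_antisymm ?_ (h1 ▸ hvadd f g)
    by_contra hgt
    push_neg at hgt
    have heq : v g = v ((f + g) + (-f)) := by ring_nf
    have h2 : min (v (f + g)) (v (-f)) ≤ v g := by
      rw [heq]; exact hvadd _ _
    rw [v_neg v hv0 hvmul] at h2
    have : v g < min (v (f + g)) (v f) := lt_min hgt h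
    exact absurd (lt_of_lt_of_le this h2) (lt_irrefl _)

lemma v_sum_min (hvadd : ∀ f g, min (v f) (v g) ≤ v (f + g))
    {ι : Type*} (s : Finset ι) (hs : s.Nonempty) (F : ι → RatFunc (RatFunc K))
    (hdist : ∀ i ∈ s, ∀ j ∈ s, i ≠ j → v (F i) ≠ v (F j)) :
    ∃ i ∈ s, v (∑ j ∈ s, F j) = v (F i) ∧ ∀ j ∈ s, v (F i) ≤ v (F j) := by
  classical
  induction s using Finset.cons_induction with
  | empty => exact absurd hs (by simp)
  | cons a s ha ih =>
    rcases s.eq_empty_or_nonempty with rfl|hs'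
    · exact ⟨a, by simp⟩
    · obtain ⟨i, hi, hsum, hmin⟩ := ih hs' (fun i hi j hj hij =>
        hdist i (Finset.mem_cons_of_mem hi) j (Finset.mem_cons_of_mem hj) hij)
      rw [Finset.sum_cons]
      have hai : a ≠ i := fun h => ha (h ▸ hi)
      have hne : v (F a) ≠ v (F i) :=
        hdist a (Finset.mem_cons_self a s) i (Finset.mem_cons_of_mem hi) hai
      rcases hne.lt_or_gt with h|h
      · refine ⟨a, Finset.mem_cons_self a s, ?_, ?_⟩
        · have : v (F a) ≠ v (∑ j ∈ s, F j) := hsum ▸ (ne_of_lt h)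
          rw [v_add_eq_min v hv0 hvmul hvadd _ _ this, hsum, min_eq_left h.le]
        · intro j hj
          rcases Finset.mem_cons.mp hj with rfl|hj
          · exact le_refl _
          · exact h.le.trans (hmin j hj)
      · refine ⟨i, Finset.mem_cons_of_mem hi, ?_, ?_⟩
        · have : v (F a) ≠ v (∑ j ∈ s, F j) := hsum ▸ (ne_of_gt h)
          rw [v_add_eq_min v hv0 hvmul hvadd _ _ this, hsum, min_eq_right h.le]
        · intro j hj
          rcases Finset.mem_cons.mp hj with rfl|hj
          · exact h.le
          · exact hmin j hj

lemma v_pow (f : RatFunc (RatFunc K)) (γ : Γ) (hγ : v f = (γ : WithTop Γ)) (k : ℕ) :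
    v (f ^ k) = ((k • γ : Γ) : WithTop Γ) := by
  induction k with
  | zero => simpa using v_one v hv0 hvmul
  | succ k ih =>
    rw [pow_succ, hvmul, ih, hγ, ← WithTop.coe_add, succ_nsmul]


lemma v_const
    (hvres : ∀ f g, v f = v g → v f ≠ ⊤ →
      ∃! lam : K, v f <
        v (f + algebraMap (Polynomial (RatFunc K)) (RatFunc (RatFunc K))
          (Polynomial.C (RatFunc.C lam)) * g))
    (c : K) (hc : c ≠ 0) :
    v (algebraMap (Polynomial (RatFunc K)) (RatFunc (RatFunc K))
      (Polynomial.C (RatFunc.C c))) = 0 := by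
  set κ : K →+* RatFunc (RatFunc K) :=
    (algebraMap (Polynomial (RatFunc K)) (RatFunc (RatFunc K))).comp
      ((Polynomial.C).comp (RatFunc.C)) with hκ
  have hκeq : ∀ a : K, κ a = algebraMap (Polynomial (RatFunc K)) (RatFunc (RatFunc K))
      (Polynomial.C (RatFunc.C a)) := fun a => rfl
  have hv1 : v 1 = 0 := v_one v hv0 hvmul
  have claim : ∀ a : K, a ≠ 0 → ¬ (0 < v (κ a)) := by
    intro a ha hlt
    obtain ⟨lam, _, huniq⟩ := hvres 1 1 rfl (by rw [hv1]; exact WithTop.zero_ne_top)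
    have h1 : (-1 : K) = lam := by
      apply huniq
      have : (1 : RatFunc (RatFunc K)) + algebraMap (Polynomial (RatFunc K))
          (RatFunc (RatFunc K)) (Polynomial.C (RatFunc.C (-1 : K))) * 1 = 0 := by
        rw [← hκeq, mul_one, map_neg, map_one]; ring
      rw [this, hv1, (hv0 0).mpr rfl]
      exact WithTop.coe_lt_top 0
    have h2 : (a - 1 : K) = lam := by
      apply huniq
      have : (1 : RatFunc (RatFunc K)) + algebraMap (Polynomial (RatFunc K))
          (RatFunc (RatFunc K)) (Polynomial.C (RatFunc.C (a - 1 : K))) * 1 = κ a := by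
        rw [← hκeq, mul_one, map_sub, map_one]; ring
      rw [this, hv1]
      exact hlt
    have : a = 0 := by
      have := h1.trans h2.symm
      linear_combination -this
    exact ha this
  have hle : ∀ a : K, a ≠ 0 → v (κ a) ≤ 0 := fun a ha => not_lt.mp (claim a ha)
  have hmul' : v (κ c) + v (κ c⁻¹) = 0 := by
    rw [← hvmul, ← map_mul, mul_inv_cancel₀ hc, map_one, hv1]
  have h1 := hle c hc
  have h2 := hle c⁻¹ (inv_ne_zero hc)
  have key : v (κ c) = 0 := by
    have h3 : v (κ c) + v (κ c⁻¹) ≤ v (κ c) + 0 := add_le_add_right h2 _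
    rw [add_zero, hmul'] at h3
    exact le_antisymm h1 h3
  rw [← hκeq]; exact key


lemma v_polyK
    (hvres : ∀ f g, v f = v g → v f ≠ ⊤ →
      ∃! lam : K, v f <
        v (f + algebraMap (Polynomial (RatFunc K)) (RatFunc (RatFunc K))
          (Polynomial.C (RatFunc.C lam)) * g))
    (hvadd : ∀ f g, min (v f) (v g) ≤ v (f + g))
    (α : Γ) (hα : α ≠ 0) (m : ℕ) (hm : 0 < m)
    (hvx : v (algebraMap (Polynomial (RatFunc K)) (RatFunc (RatFunc K))
      (Polynomial.C RatFunc.X)) = (((m : ℤ) • α : Γ) : WithTop Γ))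
    (p : Polynomial K) (hp : p ≠ 0) :
    ∃ e : ℤ, v (algebraMap (Polynomial (RatFunc K)) (RatFunc (RatFunc K))
      (Polynomial.C (algebraMap (Polynomial K) (RatFunc K) p))) =
      (((e * (m : ℤ)) • α : Γ) : WithTop Γ) := by
  classical
  set A := algebraMap (Polynomial (RatFunc K)) (RatFunc (RatFunc K)) with hA
  set φ : Polynomial K →+* RatFunc (RatFunc K) :=
    A.comp ((Polynomial.C (R := RatFunc K)).comp (algebraMap (Polynomial K) (RatFunc K))) with hφ
  set xx : RatFunc (RatFunc K) := A (Polynomial.C RatFunc.X) with hxx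
  have hφC : ∀ a : K, φ (Polynomial.C a) = A (Polynomial.C (RatFunc.C a)) := by
    intro a
    simp [hφ, RingHom.comp_apply, RatFunc.algebraMap_C]
  have hφX : φ Polynomial.X = xx := by
    simp [hφ, RingHom.comp_apply, RatFunc.algebraMap_X, hxx]
  have hrepr : φ p = ∑ i ∈ p.support, φ (Polynomial.C (p.coeff i)) * xx ^ i := by
    conv_lhs => rw [p.as_sum_support, map_sum]
    refine Finset.sum_congr rfl fun i _ => ?_
    rw [← Polynomial.C_mul_X_pow_eq_monomial, map_mul, map_pow, hφX]
  have hterm : ∀ i ∈ p.support,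
      v (φ (Polynomial.C (p.coeff i)) * xx ^ i) = ((((i : ℤ) * m) • α : Γ) : WithTop Γ) := by
    intro i hi
    have hci : p.coeff i ≠ 0 := Polynomial.mem_support_iff.mp hi
    rw [hvmul, hφC, v_const v hv0 hvmul hvres _ hci, zero_add,
      v_pow v hv0 hvmul xx _ hvx i]
    congr 1
    rw [mul_smul]
    exact (natCast_zsmul _ _).symm
  have hdist : ∀ i ∈ p.support, ∀ j ∈ p.support, i ≠ j →
      v (φ (Polynomial.C (p.coeff i)) * xx ^ i) ≠ v (φ (Polynomial.C (p.coeff j)) * xx ^ j) := by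
    intro i hi j hj hij
    rw [hterm i hi, hterm j hj]
    intro h
    have h2 : ((i : ℤ) * m) • α = ((j : ℤ) * m) • α := WithTop.coe_injective h
    have h3 : (i : ℤ) * m = (j : ℤ) * m := smul_inj hα h2
    have : (i : ℤ) = j := mul_right_cancel₀ (by exact_mod_cast hm.ne' : (m : ℤ) ≠ 0) h3
    exact hij (by exact_mod_cast this)
  obtain ⟨i₀, hi₀, hsum, _⟩ := v_sum_min v hv0 hvmul hvadd p.support
    (Polynomial.support_nonempty.mpr hp) _ hdist
  refine ⟨i₀, ?_⟩
  have hfin : v (φ p) = ((((i₀ : ℤ) * m) • α : Γ) : WithTop Γ) := by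
    rw [hrepr, hsum, hterm i₀ hi₀]
  exact hfin

lemma v_ratconst
    (hvres : ∀ f g, v f = v g → v f ≠ ⊤ →
      ∃! lam : K, v f <
        v (f + algebraMap (Polynomial (RatFunc K)) (RatFunc (RatFunc K))
          (Polynomial.C (RatFunc.C lam)) * g))
    (hvadd : ∀ f g, min (v f) (v g) ≤ v (f + g))
    (α : Γ) (hα : α ≠ 0) (m : ℕ) (hm : 0 < m)
    (hvx : v (algebraMap (Polynomial (RatFunc K)) (RatFunc (RatFunc K))
      (Polynomial.C RatFunc.X)) = (((m : ℤ) • α : Γ) : WithTop Γ))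
    (r : RatFunc K) (hr : r ≠ 0) :
    ∃ e : ℤ, v (algebraMap (Polynomial (RatFunc K)) (RatFunc (RatFunc K))
      (Polynomial.C r)) = (((e * (m : ℤ)) • α : Γ) : WithTop Γ) := by
  obtain ⟨en, hen⟩ := v_polyK v hv0 hvmul hvres hvadd α hα m hm hvx r.num (RatFunc.num_ne_zero hr)
  obtain ⟨ed, hed⟩ := v_polyK v hv0 hvmul hvres hvadd α hα m hm hvx r.denom r.denom_ne_zero
  have hmulid : r * algebraMap (Polynomial K) (RatFunc K) r.denom
      = algebraMap (Polynomial K) (RatFunc K) r.num := by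
    have hden : algebraMap (Polynomial K) (RatFunc K) r.denom ≠ 0 :=
      fun h => r.denom_ne_zero ((FaithfulSMul.algebraMap_eq_zero_iff _ _).mp h)
    nth_rewrite 1 [← RatFunc.num_div_denom r]
    exact div_mul_cancel₀ _ hden
  have key : v (algebraMap (Polynomial (RatFunc K)) (RatFunc (RatFunc K)) (Polynomial.C r))
      + (((ed * (m : ℤ)) • α : Γ) : WithTop Γ) = (((en * (m : ℤ)) • α : Γ) : WithTop Γ) := by
    rw [← hed, ← hen, ← hvmul, ← map_mul, ← map_mul, hmulid]
  have hC0 : (Polynomial.C r : Polynomial (RatFunc K)) ≠ 0 := by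
    simpa using hr
  have hnet : v (algebraMap (Polynomial (RatFunc K)) (RatFunc (RatFunc K)) (Polynomial.C r)) ≠ ⊤ := by
    intro h
    exact hC0 ((FaithfulSMul.algebraMap_eq_zero_iff _ _).mp ((hv0 _).mp h))
  lift v (algebraMap (Polynomial (RatFunc K)) (RatFunc (RatFunc K)) (Polynomial.C r)) to Γ
    using hnet with γ hγ
  refine ⟨en - ed, ?_⟩
  rw [← WithTop.coe_add] at key
  have h2 : γ + (ed * (m:ℤ)) • α = (en * (m:ℤ)) • α := WithTop.coe_injective key
  have : γ = ((en - ed) * (m : ℤ)) • α := by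
    rw [sub_mul, sub_smul]
    rw [eq_sub_iff_add_eq, h2]
  exact_mod_cast congrArg (fun z : Γ => (z : WithTop Γ)) this


lemma v_lowdeg
    (hvres : ∀ f g, v f = v g → v f ≠ ⊤ →
      ∃! lam : K, v f <
        v (f + algebraMap (Polynomial (RatFunc K)) (RatFunc (RatFunc K))
          (Polynomial.C (RatFunc.C lam)) * g))
    (hvadd : ∀ f g, min (v f) (v g) ≤ v (f + g))
    (α : Γ) (hα : α ≠ 0) (m n : ℕ) (hm : 0 < m) (hmn : Nat.Coprime m n)
    (hvx : v (algebraMap (Polynomial (RatFunc K)) (RatFunc (RatFunc K))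
      (Polynomial.C RatFunc.X)) = (((m : ℤ) • α : Γ) : WithTop Γ))
    (hvy : v (algebraMap (Polynomial (RatFunc K)) (RatFunc (RatFunc K))
      Polynomial.X) = (((n : ℤ) • α : Γ) : WithTop Γ))
    (f : Polynomial (RatFunc K)) (hf : f ≠ 0) (hdeg : f.natDegree < m) :
    ∃ c : ℤ, v (algebraMap (Polynomial (RatFunc K)) (RatFunc (RatFunc K)) f) =
      ((c • α : Γ) : WithTop Γ) := by
  classical
  set A := algebraMap (Polynomial (RatFunc K)) (RatFunc (RatFunc K)) with hA
  set yy : RatFunc (RatFunc K) := A Polynomial.X with hyy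
  have hrepr : A f = ∑ i ∈ f.support, A (Polynomial.C (f.coeff i)) * yy ^ i := by
    conv_lhs => rw [f.as_sum_support, map_sum]
    refine Finset.sum_congr rfl fun i _ => ?_
    rw [← Polynomial.C_mul_X_pow_eq_monomial, map_mul, map_pow]
  have hE : ∀ i ∈ f.support, ∃ e : ℤ,
      v (A (Polynomial.C (f.coeff i))) = (((e * (m : ℤ)) • α : Γ) : WithTop Γ) :=
    fun i hi => v_ratconst v hv0 hvmul hvres hvadd α hα m hm hvx _
      (Polynomial.mem_support_iff.mp hi)
  choose! E hEspec using hE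
  have hterm : ∀ i ∈ f.support,
      v (A (Polynomial.C (f.coeff i)) * yy ^ i) =
        (((E i * (m : ℤ) + (i : ℤ) * n) • α : Γ) : WithTop Γ) := by
    intro i hi
    rw [hvmul, hEspec i hi, v_pow v hv0 hvmul yy _ hvy i, ← WithTop.coe_add]
    congr 1
    rw [add_smul, mul_smul (i : ℤ)]
    simp [natCast_zsmul]
  have hdist : ∀ i ∈ f.support, ∀ j ∈ f.support, i ≠ j →
      v (A (Polynomial.C (f.coeff i)) * yy ^ i) ≠
      v (A (Polynomial.C (f.coeff j)) * yy ^ j) := by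
    intro i hi j hj hij h
    rw [hterm i hi, hterm j hj] at h
    have h2 := smul_inj hα (WithTop.coe_injective h)
    -- (E i - E j) * m = (j - i) * n
    have h3 : ((j : ℤ) - i) * n = (E i - E j) * m := by ring_nf; linarith
    have hdvd : (m : ℤ) ∣ ((j : ℤ) - i) * n := ⟨E i - E j, by rw [h3]; ring⟩
    have hcop : IsCoprime (m : ℤ) (n : ℤ) := Nat.isCoprime_iff_coprime.mpr hmn
    have hdvd2 : (m : ℤ) ∣ ((j : ℤ) - i) := hcop.dvd_of_dvd_mul_right hdvd
    have hji : ((j : ℤ) - i) = 0 := by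
      apply Int.eq_zero_of_abs_lt_dvd hdvd2
      have hi' : i ≤ f.natDegree := Polynomial.le_natDegree_of_mem_supp i hi
      have hj' : j ≤ f.natDegree := Polynomial.le_natDegree_of_mem_supp j hj
      rw [abs_sub_lt_iff]
      constructor <;> [skip; skip] <;>
        · have : (j : ℤ) ≤ f.natDegree := by exact_mod_cast hj'
          have : (i : ℤ) ≤ f.natDegree := by exact_mod_cast hi'
          have hdm : (f.natDegree : ℤ) < m := by exact_mod_cast hdeg
          omega
    exact hij (by omega)
  obtain ⟨i₀, hi₀, hsum, _⟩ := v_sum_min v hv0 hvmul hvadd f.support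
    (Polynomial.support_nonempty.mpr hf) _ hdist
  exact ⟨E i₀ * m + (i₀ : ℤ) * n, by rw [hrepr, hsum, hterm i₀ hi₀]⟩

end V


variable {K : Type*} [Field K]

lemma pc_iff (f : Polynomial (RatFunc K)) :
    polyCoeffs K f ↔ ∀ i : ℕ, f.coeff i ∈ (algebraMap (Polynomial K) (RatFunc K)).range :=
  forall_congr' fun i => ⟨fun ⟨p, hp⟩ => ⟨p, hp.symm⟩, fun ⟨p, hp⟩ => ⟨p, hp.symm⟩⟩

lemma pc_add {f g : Polynomial (RatFunc K)} (hf : polyCoeffs K f) (hg : polyCoeffs K g) :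
    polyCoeffs K (f + g) := by
  rw [pc_iff] at *
  intro i
  rw [coeff_add]
  exact add_mem (hf i) (hg i)

lemma pc_mul {f g : Polynomial (RatFunc K)} (hf : polyCoeffs K f) (hg : polyCoeffs K g) :
    polyCoeffs K (f * g) := by
  rw [pc_iff] at *
  intro i
  rw [coeff_mul]
  exact sum_mem fun x _ => mul_mem (hf x.1) (hg x.2)

lemma pc_one : polyCoeffs K 1 := by
  rw [pc_iff]
  intro i
  rw [coeff_one]
  split <;> [exact one_mem _; exact zero_mem _]

lemma pc_pow {f : Polynomial (RatFunc K)} (hf : polyCoeffs K f) (k : ℕ) :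
    polyCoeffs K (f ^ k) := by
  induction k with
  | zero => simpa using pc_one
  | succ k ih => rw [pow_succ]; exact pc_mul ih hf

lemma pc_constK (lam : K) : polyCoeffs K (Polynomial.C (RatFunc.C lam)) := by
  rw [pc_iff]
  intro i
  rw [coeff_C]
  split
  · exact ⟨Polynomial.C lam, RatFunc.algebraMap_C lam⟩
  · exact zero_mem _


end Stmt19Aux

/-- Proposition 3.5: let `v` be a `K`-valuation on `K(x,y)` with value group `ℤ⊕ℤ`
(so `v(K(x,y)*) = ℤ⊕ℤ`), with `v(K[x,y]*)` reversely well-ordered, `α` an indivisible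
element with `v(x) = mα`, `v(y) = nα` (`m, n` coprime positive), and `w ∈ K[x,y]*` with
`deg_y w = m` and `β = v(w)` not commensurable with `α`. Then
`v(K(x)[y]*) ⊆ ℤα + ℤ_{≥0}β`. -/
theorem stmt19 {K Γ : Type*} [Field K] [AddCommGroup Γ] [LinearOrder Γ] [IsOrderedAddMonoid Γ]
    (v : RatFunc (RatFunc K) → WithTop Γ)
    (hv0 : ∀ f, v f = ⊤ ↔ f = 0)
    (hvmul : ∀ f g, v (f * g) = v f + v g)
    (hvadd : ∀ f g, min (v f) (v g) ≤ v (f + g))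
    (hvres : ∀ f g, v f = v g → v f ≠ ⊤ →
      ∃! lam : K, v f <
        v (f + algebraMap (Polynomial (RatFunc K)) (RatFunc (RatFunc K))
          (Polynomial.C (RatFunc.C lam)) * g))
    -- the value group is `ℤ ⊕ ℤ` and `v` is onto it
    (e : Γ ≃+ ℤ × ℤ)
    (hsurj : ∀ γ : Γ, ∃ f : RatFunc (RatFunc K), f ≠ 0 ∧ v f = (γ : WithTop Γ))
    (α β : Γ) (hαneg : α < 0)
    (hind : ∀ (k : ℤ) (γ : Γ), 2 ≤ k → α ≠ k • γ)
    (hcom : ∀ a b : ℤ, a ≠ 0 → b ≠ 0 → a • α ≠ b • β)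
    (m n : ℕ) (hm : 0 < m) (hn : 0 < n) (hmn : Nat.Coprime m n)
    -- `v(x) = mα` and `v(y) = nα`
    (hvx : v (algebraMap (Polynomial (RatFunc K)) (RatFunc (RatFunc K))
      (Polynomial.C RatFunc.X)) = (((m : ℤ) • α : Γ) : WithTop Γ))
    (hvy : v (algebraMap (Polynomial (RatFunc K)) (RatFunc (RatFunc K))
      Polynomial.X) = (((n : ℤ) • α : Γ) : WithTop Γ))
    -- `v(K[x,y]*)` is reversely well-ordered
    (hrwo : ∀ S : Set Γ,
      S ⊆ {γ : Γ | ∃ f : Polynomial (RatFunc K), polyCoeffs K f ∧ f ≠ 0 ∧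
        v (algebraMap (Polynomial (RatFunc K)) (RatFunc (RatFunc K)) f) = (γ : WithTop Γ)} →
      S.Nonempty → ∃ mx ∈ S, ∀ s ∈ S, s ≤ mx)
    -- `w ∈ K[x,y]*` with `deg_y w = m` and `v(w) = β`
    (w : Polynomial (RatFunc K)) (hwpoly : polyCoeffs K w) (hw0 : w ≠ 0)
    (hwdeg : w.natDegree = m)
    (hvw : v (algebraMap (Polynomial (RatFunc K)) (RatFunc (RatFunc K)) w) =
      (β : WithTop Γ)) :
    ∀ f : Polynomial (RatFunc K), f ≠ 0 →
      ∃ (a : ℤ) (b : ℕ),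
        v (algebraMap (Polynomial (RatFunc K)) (RatFunc (RatFunc K)) f) =
          ((a • α + (b : ℤ) • β : Γ) : WithTop Γ) := by


  classical
  intro f hf
  set A := algebraMap (Polynomial (RatFunc K)) (RatFunc (RatFunc K)) with hA
  have hα : α ≠ 0 := ne_of_lt hαneg
  have hane : ∀ g : Polynomial (RatFunc K), g ≠ 0 → v (A g) ≠ ⊤ := by
    intro g hg h
    exact hg ((FaithfulSMul.algebraMap_eq_zero_iff _ _).mp ((hv0 _).mp h))
  -- β ≠ 0
  have hβ : β ≠ 0 := by
    intro hβ0
    have hvw0 : v (A w) = v 1 := by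
      rw [hvw, hβ0, Stmt19Aux.v_one v hv0 hvmul, WithTop.coe_zero]
    obtain ⟨lam, hlam, _⟩ := hvres (A w) 1 hvw0 (by rw [hvw]; exact WithTop.coe_ne_top)
    set u := w + Polynomial.C (RatFunc.C lam) with hu
    have hAu : A u = A w + A (Polynomial.C (RatFunc.C lam)) * 1 := by
      rw [hu, map_add, mul_one]
    have hu0 : u ≠ 0 := by
      intro h
      rw [hu] at h
      have hweq : w = -Polynomial.C (RatFunc.C lam) := eq_neg_of_add_eq_zero_left h
      have hdeg0 : w.natDegree = 0 := by rw [hweq]; simp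
      omega
    have hpcu : polyCoeffs K u := Stmt19Aux.pc_add hwpoly (Stmt19Aux.pc_constK lam)
    have hvau_ne : v (A u) ≠ ⊤ := hane u hu0
    lift v (A u) to Γ using hvau_ne with γ₀ hγ₀
    have hγpos : 0 < γ₀ := by
      rw [← hAu, hvw, hβ0, ← hγ₀] at hlam
      exact_mod_cast hlam
    set S : Set Γ := {γ | ∃ k : ℕ, 0 < k ∧ γ = k • γ₀} with hS
    have hsub : S ⊆ {γ : Γ | ∃ g : Polynomial (RatFunc K), polyCoeffs K g ∧ g ≠ 0 ∧
        v (A g) = (γ : WithTop Γ)} := by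
      rintro γ ⟨k, hk, rfl⟩
      exact ⟨u ^ k, Stmt19Aux.pc_pow hpcu k, pow_ne_zero k hu0,
        by rw [map_pow]; exact Stmt19Aux.v_pow v hv0 hvmul _ _ hγ₀.symm k⟩
    obtain ⟨mx, hmxS, hmax⟩ := hrwo S hsub ⟨γ₀, 1, one_pos, (one_nsmul _).symm⟩
    obtain ⟨k₀, hk₀, rfl⟩ := hmxS
    have hle : ((k₀ + 1) • γ₀ : Γ) ≤ k₀ • γ₀ := hmax _ ⟨k₀ + 1, by omega, rfl⟩
    rw [succ_nsmul] at hle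
    have : γ₀ ≤ 0 := by
      by_contra hpos
      push_neg at hpos
      have := add_lt_add_right hpos (k₀ • γ₀)
      rw [add_zero] at this
      exact absurd (lt_of_lt_of_le this hle) (lt_irrefl _)
    exact absurd hγpos (not_lt.mpr this)
  -- main strong induction
  have key : ∀ N : ℕ, ∀ g : Polynomial (RatFunc K), g ≠ 0 → g.natDegree ≤ N →
      ∃ (a : ℤ) (b : ℕ), v (A g) = ((a • α + (b : ℤ) • β : Γ) : WithTop Γ) := by
    intro N
    induction N using Nat.strong_induction_on with
    | _ N ih =>
      intro g hg hgdeg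
      by_cases hcase : g.natDegree < m
      · obtain ⟨c, hcv⟩ := Stmt19Aux.v_lowdeg v hv0 hvmul hvres hvadd α hα m n hm hmn
          hvx hvy g hg hcase
        exact ⟨c, 0, by rw [hcv]; norm_num⟩
      · push_neg at hcase
        set c := w.leadingCoeff with hlc
        have hc0 : c ≠ 0 := leadingCoeff_ne_zero.mpr hw0
        set w' := w * Polynomial.C c⁻¹ with hw'
        have hw'monic : w'.Monic := monic_mul_leadingCoeff_inv hw0
        have hw'deg : w'.natDegree = m := by
          rw [hw', natDegree_mul_C (inv_ne_zero hc0), hwdeg]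
        set q := g /ₘ w' with hqdef
        set r := g %ₘ w' with hrdef
        have hgrq : r + w' * q = g := modByMonic_add_div g w'
        have hq0 : q ≠ 0 := by
          intro h
          have hlt : g.degree < w'.degree := (divByMonic_eq_zero_iff hw'monic).mp h
          have := natDegree_lt_natDegree hg hlt
          omega
        have hqdeg : q.natDegree = g.natDegree - m := by
          rw [hqdef, natDegree_divByMonic g hw'monic, hw'deg]
        have hqlt : q.natDegree < N := by omega
        obtain ⟨a, b, hab⟩ := ih q.natDegree hqlt q hq0 le_rfl
        obtain ⟨ec, hec⟩ := Stmt19Aux.v_ratconst v hv0 hvmul hvres hvadd α hα m hm hvx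
          c⁻¹ (inv_ne_zero hc0)
        have hvw' : v (A w') = ((β + (ec * (m : ℤ)) • α : Γ) : WithTop Γ) := by
          rw [hw', map_mul, hvmul, hvw, hec, ← WithTop.coe_add]
        have hvqw' : v (A (w' * q)) =
            (((a + ec * (m : ℤ)) • α + ((b : ℤ) + 1) • β : Γ) : WithTop Γ) := by
          rw [map_mul, hvmul, hab, hvw', ← WithTop.coe_add]
          congr 1
          rw [add_smul, add_smul, one_smul]
          abel
        have hcast : (((b + 1 : ℕ) : ℤ)) = (b : ℤ) + 1 := by push_cast; ring
        by_cases hr0 : r = 0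
        · refine ⟨a + ec * (m : ℤ), b + 1, ?_⟩
          have hgq : g = w' * q := by rw [← hgrq, hr0, zero_add]
          rw [hgq, hvqw', hcast]
        · have hrdeg : r.natDegree < m := by
            have hlt := degree_modByMonic_lt g hw'monic
            have := natDegree_lt_natDegree hr0 hlt
            omega
          obtain ⟨cr, hcr⟩ := Stmt19Aux.v_lowdeg v hv0 hvmul hvres hvadd α hα m n hm hmn
            hvx hvy r hr0 hrdeg
          have hne : v (A r) ≠ v (A (w' * q)) := by
            rw [hcr, hvqw']
            intro h
            have h2 := WithTop.coe_injective h
            have h3 : (cr - (a + ec * (m : ℤ))) • α = ((b : ℤ) + 1) • β := by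
              rw [sub_smul, h2]; abel
            by_cases hz : cr - (a + ec * (m : ℤ)) = 0
            · rw [hz, zero_smul] at h3
              have h4 : ((0 : ℤ)) • β = ((b : ℤ) + 1) • β := by rw [zero_smul]; exact h3
              have := Stmt19Aux.smul_inj hβ h4
              omega
            · exact hcom _ _ hz (by omega) h3
          have hmin := Stmt19Aux.v_add_eq_min v hv0 hvmul hvadd (A r) (A (w' * q)) hne
          have hAg : v (A g) = min (v (A r)) (v (A (w' * q))) := by
            rw [← hgrq, map_add, hmin]
          rcases le_or_gt (v (A r)) (v (A (w' * q))) with hle|hlt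
          · refine ⟨cr, 0, ?_⟩
            rw [hAg, min_eq_left hle, hcr]
            norm_num
          · refine ⟨a + ec * (m : ℤ), b + 1, ?_⟩
            rw [hAg, min_eq_right hlt.le, hvqw', hcast]
  exact key f.natDegree f hf le_rfl
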